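/- Let {M_r} and {M'_r} be two towers of modules over a tower of local rings {A_r}, each free of rank d over A_r[Δ_1/Δ_r] with compatible surjective transitions, equipped with perfect A_r-bilinear pairings ⟨·,·⟩_r : M_r × M'_r → A_r for which every δ ∈ Δ_1 is self-adjoint, satisfying the compatibility ⟨ρ_{r,s} m, ρ'_{r,s} m'⟩_s = Σ_{δ ∈ Δ_s/Δ_r} ⟨m, δ^{-1} m'⟩_r. Then for each r the pairing (m, m')_r := Σ_{δ ∈ Δ_1/Δ_r} ⟨m, δ^{-1} m'⟩_r · δ taking values in A_r[Δ_1/Δ_r] is A_r[Δ_1/Δ_r]-bilinear and perfect. -/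

import Mathlib

open MonoidAlgebra

/-- Lemma `LambdaDuality` (finite level): two towers `M r`, `M' r` of modules over a
tower of local rings `A r`, each free of rank `d` over the group ring `A r[G ⧸ N r]`
(for a commutative group `G = Δ₁` with descending subgroups `N r = Δ_r`), with
compatible surjective transition maps `ρ, ρ'` into the base changes `P s r, P' s r`
(`= M s ⊗_{A s} A r`, resp. `M' s ⊗_{A s} A r`), equipped with perfect `A r`-bilinear
pairings `B r` for which every `δ ∈ Δ₁` is self-adjoint and which satisfy
`⟨ρ m, ρ' m'⟩_s = Σ_{δ ∈ Δ_s/Δ_r} ⟨m, δ⁻¹ m'⟩_r`.  Then for each `r` the group-ring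
valued pairing `(m, m')_r = Σ_{δ ∈ Δ₁/Δ_r} ⟨m, δ⁻¹ m'⟩_r · δ` is
`A r[G⧸N r]`-bilinear and perfect. -/
theorem stmt_14
    (G : Type) [CommGroup G] (N : ℕ → Subgroup G) (hN : ∀ s r : ℕ, s ≤ r → N r ≤ N s)
    [∀ r, Fintype (G ⧸ N r)]
    [∀ s r : ℕ, Fintype (↥(N s) ⧸ ((N r).subgroupOf (N s)))]
    (A : ℕ → Type) [∀ r, CommRing (A r)] [∀ r, IsLocalRing (A r)]
    [∀ r, IsLocalRing (MonoidAlgebra (A r) (G ⧸ N r))]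
    (t : ∀ s r : ℕ, s ≤ r → (A s →+* A r))
    (ht : ∀ (s r : ℕ) (h : s ≤ r), IsLocalHom (t s r h))
    (M M' : ℕ → Type) [∀ r, AddCommGroup (M r)] [∀ r, Module (A r) (M r)]
    [∀ r, AddCommGroup (M' r)] [∀ r, Module (A r) (M' r)]
    [∀ r, Module (MonoidAlgebra (A r) (G ⧸ N r)) (M r)]
    [∀ r, IsScalarTower (A r) (MonoidAlgebra (A r) (G ⧸ N r)) (M r)]
    [∀ r, Module (MonoidAlgebra (A r) (G ⧸ N r)) (M' r)]
    [∀ r, IsScalarTower (A r) (MonoidAlgebra (A r) (G ⧸ N r)) (M' r)]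
    (d : ℕ)
    (hfree : ∀ r, Nonempty (Module.Basis (Fin d) (MonoidAlgebra (A r) (G ⧸ N r)) (M r)))
    (hfree' : ∀ r, Nonempty (Module.Basis (Fin d) (MonoidAlgebra (A r) (G ⧸ N r)) (M' r)))
    -- base changes and transition maps
    (P P' : ∀ s r : ℕ, s ≤ r → Type)
    [∀ (s r : ℕ) (h : s ≤ r), AddCommGroup (P s r h)]
    [∀ (s r : ℕ) (h : s ≤ r), Module (A r) (P s r h)]
    [∀ (s r : ℕ) (h : s ≤ r), AddCommGroup (P' s r h)]
    [∀ (s r : ℕ) (h : s ≤ r), Module (A r) (P' s r h)]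
    (j : ∀ (s r : ℕ) (h : s ≤ r), M s →+ P s r h)
    (j' : ∀ (s r : ℕ) (h : s ≤ r), M' s →+ P' s r h)
    (hjsemi : ∀ (s r : ℕ) (h : s ≤ r) (a : A s) (m : M s),
      j s r h (a • m) = t s r h a • j s r h m)
    (hjsemi' : ∀ (s r : ℕ) (h : s ≤ r) (a : A s) (m : M' s),
      j' s r h (a • m) = t s r h a • j' s r h m)
    (ρ : ∀ (s r : ℕ) (h : s ≤ r), M r →ₗ[A r] P s r h)
    (ρ' : ∀ (s r : ℕ) (h : s ≤ r), M' r →ₗ[A r] P' s r h)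
    (hρsurj : ∀ (s r : ℕ) (h : s ≤ r), Function.Surjective (ρ s r h))
    (hρsurj' : ∀ (s r : ℕ) (h : s ≤ r), Function.Surjective (ρ' s r h))
    -- the perfect pairings
    (B : ∀ r, M r →ₗ[A r] M' r →ₗ[A r] A r)
    (hperf : ∀ r, Function.Bijective (B r))
    (hperf' : ∀ r, Function.Bijective (B r).flip)
    (hselfadj : ∀ (r : ℕ) (g : G) (m : M r) (m' : M' r),
      B r ((single (QuotientGroup.mk g : G ⧸ N r) (1 : A r)) • m) m' =
        B r m ((single (QuotientGroup.mk g : G ⧸ N r) (1 : A r)) • m'))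
    -- the base-changed pairings and the compatibility (pairingchangeinr)
    (Bext : ∀ (s r : ℕ) (h : s ≤ r), P s r h → P' s r h → A r)
    (hBext : ∀ (s r : ℕ) (h : s ≤ r) (m : M s) (m' : M' s),
      Bext s r h (j s r h m) (j' s r h m') = t s r h (B s m m'))
    (hcompat : ∀ (s r : ℕ) (h : s ≤ r) (m : M r) (m' : M' r),
      Bext s r h (ρ s r h m) (ρ' s r h m') =
        ∑ δq : ↥(N s) ⧸ ((N r).subgroupOf (N s)),
          B r m ((single (QuotientGroup.mk (((Quotient.out δq : ↥(N s)) : G)⁻¹) :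
            G ⧸ N r) (1 : A r)) • m')) :
    ∀ r : ℕ,
      let pair : M r → M' r → MonoidAlgebra (A r) (G ⧸ N r) := fun m m' =>
        ∑ δ : G ⧸ N r, single δ (B r m ((single δ⁻¹ (1 : A r)) • m'))
      (∀ (x : MonoidAlgebra (A r) (G ⧸ N r)) (m : M r) (m' : M' r),
        pair (x • m) m' = x * pair m m') ∧
      (∀ (x : MonoidAlgebra (A r) (G ⧸ N r)) (m : M r) (m' : M' r),
        pair m (x • m') = x * pair m m') ∧
      (∀ (m₁ m₂ : M r) (m' : M' r), pair (m₁ + m₂) m' = pair m₁ m' + pair m₂ m') ∧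
      (∀ (m : M r) (m₁' m₂' : M' r), pair m (m₁' + m₂') = pair m m₁' + pair m m₂') ∧
      (∀ f : M' r →ₗ[MonoidAlgebra (A r) (G ⧸ N r)] MonoidAlgebra (A r) (G ⧸ N r),
        ∃! m : M r, ∀ m' : M' r, pair m m' = f m') ∧
      (∀ f : M r →ₗ[MonoidAlgebra (A r) (G ⧸ N r)] MonoidAlgebra (A r) (G ⧸ N r),
        ∃! m' : M' r, ∀ m : M r, pair m m' = f m) := by
  intro r
  intro pair
  classical
  have hsa : ∀ (q : G ⧸ N r) (m : M r) (m' : M' r),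
      B r ((single q (1 : A r)) • m) m' = B r m ((single q (1 : A r)) • m') := by
    intro q m m'
    obtain ⟨g, rfl⟩ := QuotientGroup.mk_surjective q
    exact hselfadj r g m m'
  have hcoef : ∀ (m : M r) (m' : M' r) (γ : G ⧸ N r),
      (pair m m').coeff γ = B r m ((single γ⁻¹ (1 : A r)) • m') := by
    intro m m' γ
    show (∑ δ : G ⧸ N r, single δ (B r m ((single δ⁻¹ (1 : A r)) • m'))).coeff γ = _
    rw [MonoidAlgebra.coeff_sum, Finsupp.finset_sum_apply, Finset.sum_eq_single γ]
    · simp [MonoidAlgebra.coeff_single_apply]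
    · intro b _ hb
      simp [MonoidAlgebra.coeff_single_apply, hb]
    · intro h
      exact absurd (Finset.mem_univ γ) h
  have hcoef1 : ∀ (m : M r) (m' : M' r), (pair m m').coeff 1 = B r m m' := by
    intro m m'
    rw [hcoef, inv_one, ← MonoidAlgebra.one_def, one_smul]
  have hadd1 : ∀ (m₁ m₂ : M r) (m' : M' r), pair (m₁ + m₂) m' = pair m₁ m' + pair m₂ m' := by
    intro m₁ m₂ m'
    show (∑ δ : G ⧸ N r, _) = (∑ δ : G ⧸ N r, _) + (∑ δ : G ⧸ N r, _)
    rw [← Finset.sum_add_distrib]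
    refine Finset.sum_congr rfl fun δ _ => ?_
    rw [← MonoidAlgebra.single_add, map_add, LinearMap.add_apply]
  have hadd2 : ∀ (m : M r) (m₁' m₂' : M' r), pair m (m₁' + m₂') = pair m m₁' + pair m m₂' := by
    intro m m₁' m₂'
    show (∑ δ : G ⧸ N r, _) = (∑ δ : G ⧸ N r, _) + (∑ δ : G ⧸ N r, _)
    rw [← Finset.sum_add_distrib]
    refine Finset.sum_congr rfl fun δ _ => ?_
    rw [← MonoidAlgebra.single_add, smul_add, map_add]
  have hzero1 : ∀ (m' : M' r), pair 0 m' = 0 := by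
    intro m'
    show (∑ δ : G ⧸ N r, single δ (B r 0 ((single δ⁻¹ (1 : A r)) • m'))) = 0
    simp
  have hzero2 : ∀ (m : M r), pair m 0 = 0 := by
    intro m
    show (∑ δ : G ⧸ N r, single δ (B r m ((single δ⁻¹ (1 : A r)) • (0 : M' r)))) = 0
    simp
  have hsingle1 : ∀ (g : G ⧸ N r) (a : A r) (m : M r) (m' : M' r),
      pair ((single g a) • m) m' = single g a * pair m m' := by
    intro g a m m'
    apply MonoidAlgebra.ext
    refine Finsupp.ext fun δ => ?_
    rw [MonoidAlgebra.single_mul_apply, hcoef, hcoef]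
    have h1 : (single g a : MonoidAlgebra (A r) (G ⧸ N r)) • m
        = a • ((single g (1 : A r)) • m) := by
      rw [← smul_assoc a (single g (1 : A r)) m, MonoidAlgebra.smul_single', mul_one]
    have h3 : g * δ⁻¹ = (g⁻¹ * δ)⁻¹ := by
      rw [mul_inv_rev, inv_inv]; exact mul_comm g δ⁻¹
    have h2 : (single g (1 : A r) : MonoidAlgebra (A r) (G ⧸ N r)) •
          ((single δ⁻¹ (1 : A r) : MonoidAlgebra (A r) (G ⧸ N r)) • m')
        = (single ((g⁻¹ * δ)⁻¹) (1 : A r) : MonoidAlgebra (A r) (G ⧸ N r)) • m' := by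
      rw [smul_smul, MonoidAlgebra.single_mul_single, one_mul, h3]
    rw [h1, (B r).map_smul a ((single g (1 : A r)) • m), LinearMap.smul_apply,
      smul_eq_mul, hsa, h2]
  have hsingle2 : ∀ (g : G ⧸ N r) (a : A r) (m : M r) (m' : M' r),
      pair m ((single g a) • m') = single g a * pair m m' := by
    intro g a m m'
    apply MonoidAlgebra.ext
    refine Finsupp.ext fun δ => ?_
    rw [MonoidAlgebra.single_mul_apply, hcoef, hcoef]
    have h1 : (single δ⁻¹ (1 : A r) : MonoidAlgebra (A r) (G ⧸ N r)) •
          ((single g a : MonoidAlgebra (A r) (G ⧸ N r)) • m')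
        = a • ((single ((g⁻¹ * δ)⁻¹) (1 : A r) : MonoidAlgebra (A r) (G ⧸ N r)) • m') := by
      rw [smul_smul, MonoidAlgebra.single_mul_single, one_mul, mul_inv_rev, inv_inv,
        ← smul_assoc a (single (δ⁻¹ * g) (1 : A r)) m', MonoidAlgebra.smul_single', mul_one]
    rw [h1, ((B r) m).map_smul a _, smul_eq_mul]
  have hlin1 : ∀ (x : MonoidAlgebra (A r) (G ⧸ N r)) (m : M r) (m' : M' r),
      pair (x • m) m' = x * pair m m' := by
    intro x m m'
    induction x using MonoidAlgebra.induction_linear with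
    | zero => rw [zero_smul, hzero1, zero_mul]
    | add f g hf hg => rw [add_smul, hadd1, hf, hg, add_mul]
    | single g a => exact hsingle1 g a m m'
  have hlin2 : ∀ (x : MonoidAlgebra (A r) (G ⧸ N r)) (m : M r) (m' : M' r),
      pair m (x • m') = x * pair m m' := by
    intro x m m'
    induction x using MonoidAlgebra.induction_linear with
    | zero => rw [zero_smul, hzero2, zero_mul]
    | add f g hf hg => rw [add_smul, hadd2, hf, hg, add_mul]
    | single g a => exact hsingle2 g a m m'
  refine ⟨hlin1, hlin2, hadd1, hadd2, ?_, ?_⟩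
  · intro f
    have key : ∀ (a : A r) (m' : M' r),
        f (a • m') = single (1 : G ⧸ N r) a * f m' := by
      intro a m'
      have h1 : a • m' = (single (1 : G ⧸ N r) a : MonoidAlgebra (A r) (G ⧸ N r)) • m' := by
        rw [← algebraMap_smul (MonoidAlgebra (A r) (G ⧸ N r)) a m']
        congr 1
      rw [h1, f.map_smul, smul_eq_mul]
    set φ : M' r →ₗ[A r] A r :=
      { toFun := fun m' => (f m').coeff 1
        map_add' := by
          intro x y
          show (f (x + y)).coeff 1 = (f x).coeff 1 + (f y).coeff 1
          rw [map_add]; rfl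
        map_smul' := by
          intro a m'
          show (f (a • m')).coeff 1 = a • (f m').coeff 1
          rw [key, MonoidAlgebra.single_mul_apply, inv_one, one_mul, smul_eq_mul] } with hφ
    obtain ⟨m, hm⟩ := (hperf r).2 φ
    have hmain : ∀ m', pair m m' = f m' := by
      intro m'
      apply MonoidAlgebra.ext
      refine Finsupp.ext fun γ => ?_
      rw [hcoef, hm]
      show (f ((single γ⁻¹ (1 : A r)) • m')).coeff 1 = (f m').coeff γ
      rw [f.map_smul, smul_eq_mul, MonoidAlgebra.single_mul_apply, inv_inv, mul_one, one_mul]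
    refine ⟨m, hmain, ?_⟩
    intro m₂ h₂
    apply (hperf r).1
    apply LinearMap.ext
    intro m'
    rw [← hcoef1, ← hcoef1, h₂ m', hmain m']
  · intro f
    have key : ∀ (a : A r) (m : M r),
        f (a • m) = single (1 : G ⧸ N r) a * f m := by
      intro a m
      have h1 : a • m = (single (1 : G ⧸ N r) a : MonoidAlgebra (A r) (G ⧸ N r)) • m := by
        rw [← algebraMap_smul (MonoidAlgebra (A r) (G ⧸ N r)) a m]
        congr 1
      rw [h1, f.map_smul, smul_eq_mul]
    set φ : M r →ₗ[A r] A r :=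
      { toFun := fun m => (f m).coeff 1
        map_add' := by
          intro x y
          show (f (x + y)).coeff 1 = (f x).coeff 1 + (f y).coeff 1
          rw [map_add]; rfl
        map_smul' := by
          intro a m
          show (f (a • m)).coeff 1 = a • (f m).coeff 1
          rw [key, MonoidAlgebra.single_mul_apply, inv_one, one_mul, smul_eq_mul] } with hφ
    obtain ⟨m', hm'⟩ := (hperf' r).2 φ
    have hBm : ∀ m, B r m m' = φ m := by
      intro m
      have := congrFun (congrArg (fun (ψ : M r →ₗ[A r] A r) => (ψ : M r → A r)) hm') m
      simpa using this
    have hmain : ∀ m, pair m m' = f m := by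
      intro m
      apply MonoidAlgebra.ext
      refine Finsupp.ext fun γ => ?_
      rw [hcoef, ← hsa, hBm]
      show (f ((single γ⁻¹ (1 : A r)) • m)).coeff 1 = (f m).coeff γ
      rw [f.map_smul, smul_eq_mul, MonoidAlgebra.single_mul_apply, inv_inv, mul_one, one_mul]
    refine ⟨m', hmain, ?_⟩
    intro m₂' h₂
    apply (hperf' r).1
    apply LinearMap.ext
    intro m
    show B r m m₂' = B r m m'
    rw [← hcoef1, ← hcoef1, h₂ m, hmain m]
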